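/- For the Grassmannian Z_k ≅ G_{k,n} with Plücker-type coordinates, fix a length-k subsequence I of (1,…,n) and the affine chart U_I = {Z^I ≠ 0} with coordinates w_{ij} = Z^{ijI}/Z^I for i ∈ I, j ∉ I. Setting z^J = Z^J/Z^I for length-k subsequences J, the partial derivative satisfies ∂z^J/∂w_{ij} = −z^{ijJ} if i ∉ J and j ∈ J, and ∂z^J/∂w_{ij} = 0 otherwise. -/

import Mathlib

open Complex

/-- The vector space with basis `θ_S` indexed by subsets of `{1,…,n}`. -/
abbrev SpinModule (n : ℕ) : Type := Finset (Fin n) → ℂ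

/-- The sign arising when reducing `θ_{iS}` to `± θ_{S Δ {i}}`. -/
def cliffordSign {n : ℕ} (i : Fin n) (S : Finset (Fin n)) : ℂ :=
  (-1 : ℂ) ^ (S.filter (fun j => j < i)).card * (if i ∈ S then 1 else -1)

/-- The prepending operator determined by `e_i θ_I = θ_{iI}`. -/
def genR {n : ℕ} (i : Fin n) : SpinModule n →ₗ[ℂ] SpinModule n where
  toFun f := fun S => cliffordSign i S * f (symmDiff S {i})
  map_add' f g := by funext S; simp [mul_add]
  map_smul' c f := by funext S; simp [smul_eq_mul]; ring

/-- `θ_L` for an arbitrary multi-index (list) `L`, via `θ_L = e_{l₁} ⋯ e_{lₘ} θ_∅`;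
this encodes the reduction relations `θ_{iiI} = −θ_I`, `θ_{ijI} = −θ_{jiI}`. -/
def thetaList {n : ℕ} (L : List (Fin n)) : SpinModule n :=
  L.foldr (fun i f => genR i f) (Pi.single (∅ : Finset (Fin n)) 1)

/-- The coordinate `Z^L` of `ψ = Σ_S Z^S θ_S` for an arbitrary multi-index `L`,
extended from subsequences of `(1,…,n)` by the relations
`θ_{iiI} = −θ_I` and `θ_{ijI} = −θ_{jiI}`. -/
noncomputable def Zcoord {n : ℕ} (ψ : SpinModule n) (L : List (Fin n)) : ℂ :=
  ∑ S : Finset (Fin n), thetaList L S * ψ S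

/-- The Plücker coordinates of a point of `G_{k,n}` given by a `k × n` matrix `M`:
the coefficient `Z^S` is the `k × k` minor of `M` on the columns `S`. -/
noncomputable def minorCoords {n k : ℕ} (M : Matrix (Fin k) (Fin n) ℂ) : SpinModule n :=
  fun S => if h : S.card = k then (M.submatrix id (S.orderEmbOfFin h)).det else 0

/-- The `k × n` matrix of the affine chart `U_I` of `G_{k,n}`: the columns in `I` form
the identity matrix, and the remaining entries are the chart coordinates `w`. -/
noncomputable def chartMatrix {n k : ℕ} (I : Finset (Fin n)) (hI : I.card = k)
    (w : Fin n → Fin n → ℂ) : Matrix (Fin k) (Fin n) ℂ :=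
  Matrix.of fun r c =>
    if c ∈ I then (if I.orderEmbOfFin hI r = c then 1 else 0)
    else w (I.orderEmbOfFin hI r) c

-- auxiliary
def Lset {n : ℕ} (L : List (Fin n)) : Finset (Fin n) :=
  L.foldr (fun i S => symmDiff S {i}) ∅

def Lsign {n : ℕ} : List (Fin n) → ℂ
  | [] => 1
  | i :: L => cliffordSign i (symmDiff (Lset L) {i}) * Lsign L

lemma Lset_cons {n : ℕ} (i : Fin n) (L : List (Fin n)) :
    Lset (i :: L) = symmDiff (Lset L) {i} := rfl

lemma genR_single {n : ℕ} (i : Fin n) (S : Finset (Fin n)) (c : ℂ) :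
    genR i (Pi.single S c)
      = Pi.single (symmDiff S {i}) (cliffordSign i (symmDiff S {i}) * c) := by
  funext T
  simp only [genR, LinearMap.coe_mk, AddHom.coe_mk]
  rcases eq_or_ne T (symmDiff S {i}) with h | h
  · subst h
    rw [symmDiff_symmDiff_cancel_right, Pi.single_eq_same, Pi.single_eq_same]
  · have h2 : symmDiff T {i} ≠ S := by
      intro hc
      exact h (by rw [← hc, symmDiff_symmDiff_cancel_right])
    simp [Pi.single_apply, h, h2]

lemma thetaList_eq {n : ℕ} (L : List (Fin n)) :
    thetaList L = Pi.single (Lset L) (Lsign L) := by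
  induction L with
  | nil => simp [thetaList, Lset, Lsign]
  | cons i L ih =>
    show genR i (thetaList L) = _
    rw [ih, genR_single]
    rfl

lemma Zcoord_eq {n : ℕ} (ψ : SpinModule n) (L : List (Fin n)) :
    Zcoord ψ L = Lsign L * ψ (Lset L) := by
  unfold Zcoord
  rw [thetaList_eq]
  rw [Finset.sum_eq_single (Lset L)]
  · simp
  · intro b _ hb; simp [Pi.single_apply, hb]
  · simp

lemma symmDiff_singleton_of_not_mem {n : ℕ} {S : Finset (Fin n)} {a : Fin n} (h : a ∉ S) :
    symmDiff S {a} = insert a S := by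
  ext x
  rw [Finset.mem_symmDiff]
  simp only [Finset.mem_singleton, Finset.mem_insert]
  constructor
  · rintro (⟨hx, _⟩ | ⟨rfl, _⟩) <;> tauto
  · rintro (rfl | hx)
    · exact Or.inr ⟨rfl, h⟩
    · exact Or.inl ⟨hx, fun hxa => h (hxa ▸ hx)⟩

lemma symmDiff_singleton_of_mem {n : ℕ} {S : Finset (Fin n)} {a : Fin n} (h : a ∈ S) :
    symmDiff S {a} = S.erase a := by
  ext x
  rw [Finset.mem_symmDiff, Finset.mem_erase]
  simp only [Finset.mem_singleton]
  constructor
  · rintro (⟨hx, hxa⟩ | ⟨rfl, hx⟩) <;> tauto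
  · rintro ⟨hxa, hx⟩; exact Or.inl ⟨hx, hxa⟩

lemma Lset_nodup {n : ℕ} (L : List (Fin n)) (h : L.Nodup) : Lset L = L.toFinset := by
  induction L with
  | nil => rfl
  | cons a L ih =>
    rw [Lset_cons, ih (List.Nodup.of_cons h), List.toFinset_cons,
      symmDiff_singleton_of_not_mem (by simp [List.nodup_cons.mp h |>.1])]

lemma orderEmbOfFin_pos {n k : ℕ} (S : Finset (Fin n)) (h : S.card = k) (s : Fin k) :
    (S.filter (fun l => l < S.orderEmbOfFin h s)).card = (s : ℕ) := by
  have him : S.filter (fun l => l < S.orderEmbOfFin h s)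
      = (Finset.univ.filter (fun u : Fin k => u < s)).image (S.orderEmbOfFin h) := by
    ext l
    simp only [Finset.mem_filter, Finset.mem_image, Finset.mem_univ, true_and]
    constructor
    · rintro ⟨hl, hlt⟩
      have : l ∈ Set.range (S.orderEmbOfFin h) := by
        rw [Finset.range_orderEmbOfFin]; exact hl
      obtain ⟨u, rfl⟩ := this
      exact ⟨u, (S.orderEmbOfFin h).lt_iff_lt.mp hlt, rfl⟩
    · rintro ⟨u, hu, rfl⟩
      exact ⟨Finset.orderEmbOfFin_mem _ _ _, (S.orderEmbOfFin h).lt_iff_lt.mpr hu⟩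
  rw [him, Finset.card_image_of_injective _ (S.orderEmbOfFin h).injective]
  have : Finset.univ.filter (fun u : Fin k => u < s) = Finset.Iio s := by
    ext u; simp
  rw [this, Fin.card_Iio]

open Equiv in
lemma cycleRange_strictMonoOn {m : ℕ} (a : Fin (m + 1)) :
    StrictMonoOn (⇑(a.cycleRange)) {x | x ≠ a} := by
  intro x hx y hy hxy
  simp only [Set.mem_setOf_eq] at hx hy
  rw [Fin.lt_def]
  rcases lt_or_gt_of_ne hx with hxa | hxa <;> rcases lt_or_gt_of_ne hy with hya | hya
  · rw [Fin.coe_cycleRange_of_lt hxa, Fin.coe_cycleRange_of_lt hya]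
    exact Nat.succ_lt_succ hxy
  · rw [Fin.coe_cycleRange_of_lt hxa, Fin.cycleRange_of_gt hya]
    have h1 : (x : ℕ) < (a : ℕ) := hxa
    have h2 : (a : ℕ) < (y : ℕ) := hya
    omega
  · exact absurd (hxa.trans (hxy.trans hya)) (lt_irrefl a)
  · rw [Fin.cycleRange_of_gt hxa, Fin.cycleRange_of_gt hya]
    exact hxy

open Equiv in
lemma perm_eq_of_strictMonoOn {m : ℕ} (π ρ : Equiv.Perm (Fin (m + 1))) (s₀ : Fin (m + 1))
    (h0 : π s₀ = ρ s₀) (hπ : StrictMonoOn ⇑π {s | s ≠ s₀})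
    (hρ : StrictMonoOn ⇑ρ {s | s ≠ s₀}) : π = ρ := by
  have hA : (Finset.univ.erase s₀).card = m := by
    rw [Finset.card_erase_of_mem (Finset.mem_univ _)]; simp
  set emb := (Finset.univ.erase s₀).orderEmbOfFin hA with hemb
  have hembne : ∀ x, emb x ≠ s₀ := fun x =>
    Finset.ne_of_mem_erase (Finset.orderEmbOfFin_mem _ hA x)
  have hB : (Finset.univ.erase (π s₀)).card = m := by
    rw [Finset.card_erase_of_mem (Finset.mem_univ _)]; simp
  have key : ∀ (g : Equiv.Perm (Fin (m + 1))), g s₀ = π s₀ →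
      StrictMonoOn ⇑g {s | s ≠ s₀} →
      (fun x => g (emb x)) = (Finset.univ.erase (π s₀)).orderEmbOfFin hB := by
    intro g hg hmono
    apply Finset.orderEmbOfFin_unique hB
    · intro x
      refine Finset.mem_erase.mpr ⟨?_, Finset.mem_univ _⟩
      rw [← hg]
      exact fun hc => hembne x (g.injective hc)
    · intro x y hxy
      exact hmono (hembne x) (hembne y) (((Finset.univ.erase s₀).orderEmbOfFin hA).strictMono hxy)
  have h1 := key π rfl hπ
  have h2 := key ρ h0.symm hρ
  apply Equiv.ext
  intro x
  rcases eq_or_ne x s₀ with rfl | hx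
  · exact h0
  · have : x ∈ Set.range emb := by
      rw [hemb, Finset.range_orderEmbOfFin]
      exact Finset.mem_erase.mpr ⟨hx, Finset.mem_univ _⟩
    obtain ⟨u, rfl⟩ := this
    have := congrFun (h1.trans h2.symm) u
    exact this

open Equiv in
lemma sign_eq_of_strictMonoOn {m : ℕ} (π : Equiv.Perm (Fin (m + 1))) (s₀ : Fin (m + 1))
    (h : StrictMonoOn ⇑π {s | s ≠ s₀}) :
    (Equiv.Perm.sign π : ℂ) = (-1) ^ ((s₀ : ℕ) + ((π s₀ : Fin (m + 1)) : ℕ)) := by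
  set t₀ := π s₀ with ht₀
  set ρ : Equiv.Perm (Fin (m + 1)) := (Fin.cycleRange t₀)⁻¹ * Fin.cycleRange s₀ with hρ
  have hρs₀ : ρ s₀ = t₀ := by
    simp only [hρ, Perm.mul_apply, Fin.cycleRange_self]
    exact (Equiv.symm_apply_eq _).mpr (Fin.cycleRange_self t₀).symm
  have hρmono : StrictMonoOn ⇑ρ {s | s ≠ s₀} := by
    intro x hx y hy hxy
    simp only [Set.mem_setOf_eq] at hx hy
    have hrx : ρ x ≠ t₀ := fun hc => hx (ρ.injective (hc.trans hρs₀.symm))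
    have hry : ρ y ≠ t₀ := fun hc => hy (ρ.injective (hc.trans hρs₀.symm))
    have hcx : Fin.cycleRange t₀ (ρ x) = Fin.cycleRange s₀ x := by
      simp [hρ, Perm.mul_apply]
    have hcy : Fin.cycleRange t₀ (ρ y) = Fin.cycleRange s₀ y := by
      simp [hρ, Perm.mul_apply]
    have hlt : Fin.cycleRange t₀ (ρ x) < Fin.cycleRange t₀ (ρ y) := by
      rw [hcx, hcy]
      exact cycleRange_strictMonoOn s₀ hx hy hxy
    by_contra hc
    rcases eq_or_lt_of_le (not_lt.mp hc) with heq | hgt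
    · exact absurd (congrArg _ heq.symm : Fin.cycleRange t₀ (ρ x) = _) (ne_of_lt hlt)
    · exact absurd (cycleRange_strictMonoOn t₀ hry hrx hgt) (not_lt.mpr hlt.le)
  have hπρ : π = ρ := perm_eq_of_strictMonoOn π ρ s₀ (by rw [hρs₀]) h hρmono
  rw [hπρ]
  have : Equiv.Perm.sign ρ = (-1 : ℤˣ) ^ ((s₀ : ℕ) + (t₀ : ℕ)) := by
    have hinv : ((-1 : ℤˣ))⁻¹ = -1 := by decide
    rw [hρ, map_mul, map_inv, Fin.sign_cycleRange, Fin.sign_cycleRange, pow_add, ← inv_pow, hinv,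
      mul_comm]
  rw [this]
  push_cast
  norm_num

/-- Lemma 3.5(1): on the chart `U_I` of `G_{k,n}` with coordinates
`w_{ij} = Z^{ijI}/Z^I` (`i ∈ I`, `j ∉ I`), the normalized Plücker coordinates
`z^J = Z^J/Z^I` satisfy `∂z^J/∂w_{ij} = −z^{ijJ}` if `i ∉ J` and `j ∈ J`, and
`∂z^J/∂w_{ij} = 0` otherwise. -/
theorem chart_partial_derivative (n k : ℕ) (I : Finset (Fin n)) (hI : I.card = k)
    (w : Fin n → Fin n → ℂ) (i j : Fin n) (hi : i ∈ I) (hj : j ∉ I)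
    (J : List (Fin n)) (hJ : J.Nodup) (hJl : J.length = k) :
    deriv (fun t : ℂ =>
        Zcoord (minorCoords (chartMatrix I hI
          (Function.update w i (Function.update (w i) j t)))) J) (w i j)
      = if i ∉ J.toFinset ∧ j ∈ J.toFinset then
          -Zcoord (minorCoords (chartMatrix I hI w)) (i :: j :: J)
        else 0 := by
  classical
  set S := J.toFinset with hSdef
  have hS : S.card = k := by
    rw [hSdef, List.card_toFinset, List.dedup_eq_self.mpr hJ, hJl]
  set σ := S.orderEmbOfFin hS with hσ
  set τ := I.orderEmbOfFin hI with hτ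
  have hLJ : Lset J = S := Lset_nodup J hJ
  have hF : ∀ v : Fin n → Fin n → ℂ,
      Zcoord (minorCoords (chartMatrix I hI v)) J
        = Lsign J * ((chartMatrix I hI v).submatrix id ⇑σ).det := by
    intro v
    rw [Zcoord_eq, hLJ]
    simp only [minorCoords]
    rw [dif_pos hS]
  by_cases hjS : j ∈ S
  swap
  · -- easy case : j does not appear in J
    rw [if_neg (by tauto)]
    have hconst : ∀ t : ℂ,
        (chartMatrix I hI (Function.update w i (Function.update (w i) j t))).submatrix id ⇑σ
          = (chartMatrix I hI w).submatrix id ⇑σ := by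
      intro t
      ext r s
      simp only [Matrix.submatrix_apply, chartMatrix, Matrix.of_apply, id]
      by_cases hc : σ s ∈ I
      · rw [if_pos hc, if_pos hc]
      · rw [if_neg hc, if_neg hc]
        have hcj : σ s ≠ j := fun hcj => hjS (hcj ▸ Finset.orderEmbOfFin_mem S hS s)
        rcases eq_or_ne (τ r) i with hri | hri
        · rw [hri, Function.update_self, Function.update_of_ne hcj]
        · rw [Function.update_of_ne hri]
    simp only [hF, hconst]
    exact deriv_const _ _
  · -- j appears in J
    obtain ⟨m, rfl⟩ : ∃ m, k = m + 1 := by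
      have hpos : 0 < k := hS ▸ Finset.card_pos.mpr ⟨j, hjS⟩
      exact ⟨k - 1, by omega⟩
    obtain ⟨s₀, hs₀⟩ : ∃ s₀, σ s₀ = j := by
      have : j ∈ Set.range ⇑σ := by
        rw [hσ, Finset.range_orderEmbOfFin]; exact hjS
      exact this
    obtain ⟨r₀, hr₀⟩ : ∃ r₀, τ r₀ = i := by
      have : i ∈ Set.range ⇑τ := by
        rw [hτ, Finset.range_orderEmbOfFin]; exact hi
      exact this
    set N := chartMatrix I hI w with hN
    set B := N.submatrix id ⇑σ with hB
    set u : Fin (m + 1) → ℂ := fun r => if r = r₀ then 0 else N r j with hu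
    set e : Fin (m + 1) → ℂ := Pi.single r₀ 1 with he
    have heapp : ∀ r, e r = if r = r₀ then 1 else 0 := fun r => Pi.single_apply r₀ 1 r
    have key : ∀ t : ℂ,
        (chartMatrix I hI (Function.update w i (Function.update (w i) j t))).submatrix id ⇑σ
          = B.updateCol s₀ (u + t • e) := by
      intro t
      ext r s
      rw [Matrix.updateCol_apply]
      by_cases hss : s = s₀
      · rw [if_pos hss, hss]
        have hL : (chartMatrix I hI (Function.update w i (Function.update (w i) j t))).submatrix
            id ⇑σ r s₀ = Function.update w i (Function.update (w i) j t) (τ r) j := by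
          simp only [Matrix.submatrix_apply, chartMatrix, Matrix.of_apply, id, hs₀, if_neg hj]
          rfl
        have hur : u r = if r = r₀ then 0 else N r j := rfl
        rw [hL, Pi.add_apply, Pi.smul_apply, smul_eq_mul, heapp, hur]
        rcases eq_or_ne r r₀ with hr | hr
        · rw [hr, hr₀, Function.update_self, Function.update_self, if_pos rfl, if_pos rfl]
          ring
        · have hri : τ r ≠ i := fun hc => hr (τ.injective (hc.trans hr₀.symm))
          rw [Function.update_of_ne hri, if_neg hr, if_neg hr, mul_zero, add_zero]
          simp [hN, chartMatrix, hj]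
          rfl
      · rw [if_neg hss]
        have hcj : σ s ≠ j := fun hc => hss (σ.injective (hc.trans hs₀.symm))
        simp only [hB, Matrix.submatrix_apply, chartMatrix, hN, Matrix.of_apply, id]
        by_cases hc : σ s ∈ I
        · rw [if_pos hc, if_pos hc]
        · rw [if_neg hc, if_neg hc]
          rcases eq_or_ne (τ r) i with hri | hri
          · rw [hri, Function.update_self, Function.update_of_ne hcj]
          · rw [Function.update_of_ne hri]
    have hderiv : deriv (fun t : ℂ =>
        Zcoord (minorCoords (chartMatrix I hI
          (Function.update w i (Function.update (w i) j t)))) J) (w i j)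
        = Lsign J * (B.updateCol s₀ e).det := by
      have heq : (fun t : ℂ =>
          Zcoord (minorCoords (chartMatrix I hI
            (Function.update w i (Function.update (w i) j t)))) J)
          = fun t : ℂ => Lsign J * ((B.updateCol s₀ u).det
              + t * (B.updateCol s₀ e).det) := by
        funext t
        rw [hF, key t, Matrix.det_updateCol_add, Matrix.det_updateCol_smul]
      have h1 : HasDerivAt (fun t : ℂ => Lsign J * ((B.updateCol s₀ u).det
            + t * (B.updateCol s₀ e).det))
          (Lsign J * (1 * (B.updateCol s₀ e).det)) (w i j) :=
        (((hasDerivAt_id _).mul_const _).const_add _).const_mul _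
      rw [heq, h1.deriv, one_mul]
    set σt : Fin (m + 1) → Fin n := fun s => if s = s₀ then i else σ s with hσt
    have hσts₀ : σt s₀ = i := by rw [hσt]; exact if_pos rfl
    have hσts : ∀ s, s ≠ s₀ → σt s = σ s := by
      intro s hss; rw [hσt]; exact if_neg hss
    have hDσ : B.updateCol s₀ e = N.submatrix id σt := by
      ext r s
      rw [Matrix.updateCol_apply]
      by_cases hss : s = s₀
      · rw [if_pos hss, hss]
        have hR : N.submatrix id σt r s₀ = if τ r = i then (1 : ℂ) else 0 := by
          simp only [Matrix.submatrix_apply, hσts₀, id, hN, chartMatrix, Matrix.of_apply,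
            if_pos hi]
          rfl
        rw [hR, heapp]
        rcases eq_or_ne r r₀ with hr | hr
        · rw [if_pos hr, if_pos (hr ▸ hr₀)]
        · have hri : τ r ≠ i := fun hc => hr (τ.injective (hc.trans hr₀.symm))
          rw [if_neg hri, if_neg hr]
      · rw [if_neg hss]
        simp only [hB, Matrix.submatrix_apply, hσts s hss, id]
    by_cases hiS : i ∈ S
    · -- i also appears: derivative vanishes
      rw [if_neg (fun h => h.1 hiS)]
      obtain ⟨s₁, hs₁⟩ : ∃ s₁, σ s₁ = i := by
        have : i ∈ Set.range ⇑σ := by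
          rw [hσ, Finset.range_orderEmbOfFin]; exact hiS
        exact this
      have hne : s₀ ≠ s₁ := by
        intro hc
        have : j = i := by rw [← hs₀, hc, hs₁]
        exact hj (this ▸ hi)
      have hzero : (N.submatrix id σt).det = 0 := by
        apply Matrix.det_zero_of_column_eq hne
        intro r
        simp only [Matrix.submatrix_apply, hσts₀, hσts s₁ hne.symm, id, hs₁]
      rw [hderiv, hDσ, hzero, mul_zero]
    · -- main case
      rw [if_pos ⟨hiS, hjS⟩]
      have hij : i ≠ j := fun hc => hj (hc ▸ hi)
      have hiT' : i ∉ S.erase j := fun h => hiS (Finset.mem_of_mem_erase h)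
      set T := insert i (S.erase j) with hT
      have hTc : T.card = m + 1 := by
        rw [hT, Finset.card_insert_of_notMem hiT', Finset.card_erase_of_mem hjS, hS]
        omega
      set σ' := T.orderEmbOfFin hTc with hσ'
      have hmemT : ∀ s, σt s ∈ T := by
        intro s
        by_cases hss : s = s₀
        · rw [hss, hσts₀, hT]
          exact Finset.mem_insert_self i _
        · rw [hσts s hss, hT]
          refine Finset.mem_insert_of_mem (Finset.mem_erase.mpr ⟨?_, ?_⟩)
          · exact fun hc => hss (σ.injective (hc.trans hs₀.symm))
          · exact Finset.orderEmbOfFin_mem S hS s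
      have hinj : Function.Injective σt := by
        intro x y hxy
        by_cases hx : x = s₀ <;> by_cases hy : y = s₀
        · rw [hx, hy]
        · rw [hx, hσts₀, hσts y hy] at hxy
          exact absurd (hxy ▸ Finset.orderEmbOfFin_mem S hS y) hiS
        · rw [hy, hσts₀, hσts x hx] at hxy
          exact absurd (hxy.symm ▸ Finset.orderEmbOfFin_mem S hS x) hiS
        · rw [hσts x hx, hσts y hy] at hxy
          exact σ.injective hxy
      have hbij : Function.Bijective
          (fun s => (T.orderIsoOfFin hTc).symm ⟨σt s, hmemT s⟩ : Fin (m + 1) → Fin (m + 1)) := by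
        refine Finite.injective_iff_bijective.mp ?_
        intro x y hxy
        have := (T.orderIsoOfFin hTc).symm.injective hxy
        exact hinj (congrArg Subtype.val this)
      set π : Equiv.Perm (Fin (m + 1)) := Equiv.ofBijective _ hbij with hπdef
      have hπ : ∀ s, σ' (π s) = σt s := by
        intro s
        show σ' ((T.orderIsoOfFin hTc).symm ⟨σt s, hmemT s⟩) = σt s
        rw [hσ', ← Finset.coe_orderIsoOfFin_apply, OrderIso.apply_symm_apply]
      have hmono : StrictMonoOn ⇑π {s | s ≠ s₀} := by
        intro x hx y hy hxy
        have h1 : σ' (π x) < σ' (π y) := by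
          rw [hπ x, hπ y, hσts x hx, hσts y hy]
          exact σ.strictMono hxy
        exact σ'.lt_iff_lt.mp h1
      set t₀ := π s₀ with ht₀
      have hπs₀ : σ' t₀ = i := by
        rw [ht₀, hπ s₀, hσts₀]
      have hsign := sign_eq_of_strictMonoOn π s₀ hmono
      rw [← ht₀] at hsign
      have hsub : N.submatrix id σt = (N.submatrix id ⇑σ').submatrix id ⇑π := by
        ext r s
        simp [Matrix.submatrix_apply, hπ s]
      have hZ : Zcoord (minorCoords N) (i :: j :: J)
          = cliffordSign i T * (cliffordSign j (S.erase j) * Lsign J)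
            * (N.submatrix id ⇑σ').det := by
        rw [Zcoord_eq]
        have h1 : Lset (j :: J) = S.erase j := by
          rw [Lset_cons, hLJ, symmDiff_singleton_of_mem hjS]
        have h2 : Lset (i :: j :: J) = T := by
          rw [Lset_cons, h1, symmDiff_singleton_of_not_mem hiT', hT]
        have h3 : Lsign (i :: j :: J)
            = cliffordSign i T * (cliffordSign j (S.erase j) * Lsign J) := by
          show cliffordSign i (symmDiff (Lset (j :: J)) {i}) * Lsign (j :: J) = _
          have h4 : Lsign (j :: J) = cliffordSign j (symmDiff (Lset J) {j}) * Lsign J := rfl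
          rw [h4, h1, hLJ, symmDiff_singleton_of_mem hjS,
            symmDiff_singleton_of_not_mem hiT', hT]
        rw [h2, h3]
        simp only [minorCoords]
        rw [dif_pos hTc]
      have hbj : cliffordSign j (S.erase j) = -(-1 : ℂ) ^ ((s₀ : ℕ)) := by
        unfold cliffordSign
        rw [if_neg (Finset.notMem_erase j S)]
        have hfe : (S.erase j).filter (fun l => l < j) = S.filter (fun l => l < j) := by
          ext x
          simp only [Finset.mem_filter, Finset.mem_erase]
          constructor
          · rintro ⟨⟨_, hx⟩, hlt⟩; exact ⟨hx, hlt⟩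
          · rintro ⟨hx, hlt⟩; exact ⟨⟨ne_of_lt hlt, hx⟩, hlt⟩
        rw [hfe, ← hs₀, hσ, orderEmbOfFin_pos S hS s₀]
        ring
      have hai : cliffordSign i T = (-1 : ℂ) ^ ((t₀ : ℕ)) := by
        unfold cliffordSign
        rw [if_pos (hT ▸ Finset.mem_insert_self i _), ← hπs₀, hσ',
          orderEmbOfFin_pos T hTc t₀, mul_one]
      rw [hderiv, hDσ, hsub, Matrix.det_permute', hZ, hbj, hai, hsign, pow_add]
      ring
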